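/- Channel-reduction invariance of the DI capacity: let W be a DMC with finite alphabets X, Y, cost function φ : X → [0,∞) and constraint A ≥ 0, and let W_r : X_r → Y be the reduced channel of W. Then the deterministic identification capacity of W under input constraint A equals the deterministic identification capacity of W_r under the same input constraint A (with cost φ restricted to X_r). -/
import Mathlib


open Finset

/-- The probability `W^n(D | x^n)` that the output of the `n`-fold memoryless extension of the
channel `W`, on input `x^n`, lies in the set `D ⊆ Y^n`. -/
def channelPr {X Y : Type*} [Fintype Y] (W : X → Y → ℝ) {n : ℕ}
    (x : Fin n → X) (D : Finset (Fin n → Y)) : ℝ :=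
  ∑ y ∈ D, ∏ t, W (x t) (y t)

/-- A deterministic identification code with `M` messages and blocklength `n` for the channel `W`
under input-cost function `φ` and constraint `A`, with type I error at most `lam1` and type II
error at most `lam2`. -/
def IsDICode {X Y : Type*} [Fintype Y] [DecidableEq Y] (W : X → Y → ℝ)
    (φ : X → ℝ) (A : ℝ) {n M : ℕ}
    (u : Fin M → Fin n → X) (D : Fin M → Finset (Fin n → Y)) (lam1 lam2 : ℝ) : Prop :=
  (∀ i, (∑ t, φ (u i t)) / n ≤ A) ∧
  (∀ i, channelPr W (u i) (D i)ᶜ ≤ lam1) ∧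
  (∀ i j, i ≠ j → channelPr W (u i) (D j) ≤ lam2)

/-- A rate `R > 0` is achievable for deterministic identification over `W` under input
constraint `A` if for all `lam1, lam2 > 0` and all sufficiently large `n` there is a
`(⌈2^{nR}⌉, n, lam1, lam2)` DI code. -/
def DIAchievable {X Y : Type*} [Fintype Y] [DecidableEq Y] (W : X → Y → ℝ)
    (φ : X → ℝ) (A : ℝ) (R : ℝ) : Prop :=
  0 < R ∧ ∀ lam1 lam2 : ℝ, 0 < lam1 → 0 < lam2 → ∃ N : ℕ, ∀ n ≥ N,
    ∃ (u : Fin ⌈(2 : ℝ) ^ ((n : ℝ) * R)⌉₊ → Fin n → X)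
      (D : Fin ⌈(2 : ℝ) ^ ((n : ℝ) * R)⌉₊ → Finset (Fin n → Y)),
      IsDICode W φ A u D lam1 lam2

/-- The deterministic identification capacity: the supremum of achievable rates
(`0` if there are none, by the convention `sSup ∅ = 0` in `ℝ`). -/
noncomputable def DICapacity {X Y : Type*} [Fintype Y] [DecidableEq Y]
    (W : X → Y → ℝ) (φ : X → ℝ) (A : ℝ) : ℝ :=
  sSup {R : ℝ | DIAchievable W φ A R}

/-- Shannon entropy (base 2) of a probability mass function on a finite alphabet. -/
noncomputable def shannonEntropy {X : Type*} [Fintype X] (p : X → ℝ) : ℝ :=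
  -∑ x, p x * Real.logb 2 (p x)

/-- Channel-reduction invariance of the DI capacity: the deterministic identification capacity of
`W` under input constraint `A` equals that of the reduced channel `W_r` (defined on a set `Xr` of
minimal-cost representatives, one per class of identical rows) under the same constraint. -/
theorem DI_capacity_reduction
    {X Y : Type*} [Fintype X] [Fintype Y] [DecidableEq X] [DecidableEq Y]
    (W : X → Y → ℝ) (hW0 : ∀ x y, 0 ≤ W x y) (hW1 : ∀ x, ∑ y, W x y = 1)
    (φ : X → ℝ) (hφ : ∀ x, 0 ≤ φ x) (A : ℝ) (hA : 0 ≤ A)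
    (Xr : Finset X)
    (hrep : ∀ x : X, ∃ z ∈ Xr, ∀ y, W z y = W x y)
    (hdist : ∀ z ∈ Xr, ∀ z' ∈ Xr, (∀ y, W z y = W z' y) → z = z')
    (hmin : ∀ x : X, ∀ z ∈ Xr, (∀ y, W z y = W x y) → φ z ≤ φ x) :
    DICapacity W φ A =
      DICapacity (fun (z : {x : X // x ∈ Xr}) (y : Y) => W z.val y)
        (fun z : {x : X // x ∈ Xr} => φ z.val) A := by

  unfold DICapacity
  congr 1
  ext R
  simp only [Set.mem_setOf_eq]
  constructor
  · rintro ⟨hR, h⟩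
    refine ⟨hR, fun lam1 lam2 h1 h2 => ?_⟩
    obtain ⟨N, hN⟩ := h lam1 lam2 h1 h2
    refine ⟨N, fun n hn => ?_⟩
    obtain ⟨u, D, hc, he1, he2⟩ := hN n hn
    choose rep hrepmem hrepeq using hrep
    refine ⟨fun i t => ⟨rep (u i t), hrepmem _⟩, D, ?_, ?_, ?_⟩
    · intro i
      have hsum : (∑ t, φ (rep (u i t))) ≤ ∑ t, φ (u i t) :=
        Finset.sum_le_sum fun t _ => hmin (u i t) _ (hrepmem _) (hrepeq _)
      rcases Nat.eq_zero_or_pos n with h0 | h0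
      · subst h0; simpa using hA
      · exact le_trans (div_le_div_of_nonneg_right hsum (by positivity)) (hc i)
    · intro i
      refine le_trans (le_of_eq ?_) (he1 i)
      exact Finset.sum_congr rfl fun y _ =>
        Finset.prod_congr rfl fun t _ => hrepeq (u i t) (y t)
    · intro i j hij
      refine le_trans (le_of_eq ?_) (he2 i j hij)
      exact Finset.sum_congr rfl fun y _ =>
        Finset.prod_congr rfl fun t _ => hrepeq (u i t) (y t)
  · rintro ⟨hR, h⟩
    refine ⟨hR, fun lam1 lam2 h1 h2 => ?_⟩
    obtain ⟨N, hN⟩ := h lam1 lam2 h1 h2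
    refine ⟨N, fun n hn => ?_⟩
    obtain ⟨u, D, hc, he1, he2⟩ := hN n hn
    exact ⟨fun i t => (u i t).val, D, hc, he1, he2⟩
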